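/- Let p be an odd prime with p ≡ 3 (mod 4), m = 2s with s an odd positive integer and gcd(m,p) = 1, q = p^m, d = (q−1)/(p+1), and D = {x ∈ F_q^* : Tr_{q/p}(x^d) = 0}. Then |D| = 2(q−1)/(p+1) and the code C_D has dimension m over F_p. -/

import Mathlib

open scoped Classical

lemma auxCardRoots (F : Type*) [Field F] [Fintype F] {N : ℕ} (hN : 0 < N)
    (hdvd : N ∣ Fintype.card F - 1) :
    ((Finset.univ : Finset F).filter fun x => x ^ N = 1).card = N := by
  classical
  obtain ⟨g, hg⟩ := IsCyclic.exists_generator (α := Fˣ)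
  have hog : orderOf g = Fintype.card F - 1 := by
    rw [orderOf_eq_card_of_forall_mem_zpowers hg, Nat.card_eq_fintype_card, Fintype.card_units]
  have hcard1 : 0 < Fintype.card F - 1 := Nat.lt_of_lt_of_le (by norm_num)
    (Nat.le_sub_one_of_lt Fintype.one_lt_card)
  have hkdvd : (Fintype.card F - 1) / N ∣ Fintype.card F - 1 := Nat.div_dvd_of_dvd hdvd
  have hk : orderOf (g ^ ((Fintype.card F - 1) / N)) = N := by
    rw [orderOf_pow, hog, Nat.gcd_eq_right hkdvd, Nat.div_div_self hdvd hcard1.ne']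
  have hprim : IsPrimitiveRoot ((g ^ ((Fintype.card F - 1) / N) : Fˣ) : F) N := by
    rw [IsPrimitiveRoot.coe_units_iff]
    have h2 := IsPrimitiveRoot.orderOf (g ^ ((Fintype.card F - 1) / N))
    rwa [hk] at h2
  have : ((Finset.univ : Finset F).filter fun x => x ^ N = 1)
      = Polynomial.nthRootsFinset N (1 : F) := by
    ext x
    simp [Polynomial.mem_nthRootsFinset hN]
  rw [this, hprim.card_nthRootsFinset]


lemma auxTraceFormula (p : ℕ) [Fact p.Prime] (F : Type*) [Field F] [Fintype F]
    [Algebra (ZMod p) F] {m : ℕ} (hm : 0 < m) (hF : Fintype.card F = p ^ m) (u : F) :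
    algebraMap (ZMod p) F (Algebra.trace (ZMod p) F u)
      = ∑ j ∈ Finset.range m, u ^ p ^ j := by
  classical
  have hp : p.Prime := Fact.out
  haveI : CharP F p := (Algebra.charP_iff (ZMod p) F p).mp (ZMod.charP p)
  -- Frobenius as an algebra equivalence
  let fh : F →ₐ[ZMod p] F :=
    { toRingHom := frobenius F p,
      commutes' := fun c => by
        show frobenius F p (algebraMap (ZMod p) F c) = algebraMap (ZMod p) F c
        rw [frobenius_def, ← map_pow, ZMod.pow_card] }
  have hinjf : Function.Injective fh := RingHom.injective (fh : F →+* F)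
  let σ : F ≃ₐ[ZMod p] F :=
    AlgEquiv.ofBijective fh ((Finite.injective_iff_bijective).mp hinjf)
  have hσ : ∀ x : F, σ x = x ^ p := fun x => rfl
  have hpow : ∀ (j : ℕ) (x : F), (σ ^ j) x = x ^ p ^ j := by
    intro j
    induction j with
    | zero => intro x; simp
    | succ n ih =>
      intro x
      rw [pow_succ, AlgEquiv.mul_apply, ih (σ x), hσ, ← pow_mul, pow_succ']
  -- the Frobenius powers enumerate the Galois group
  have hfr : Module.finrank (ZMod p) F = m := by
    have hc := Module.card_eq_pow_finrank (K := ZMod p) (V := F)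
    rw [ZMod.card, hF] at hc
    exact (Nat.pow_right_injective hp.two_le hc).symm
  have hcardGal : Fintype.card (F ≃ₐ[ZMod p] F) = m := by
    rw [← Nat.card_eq_fintype_card, IsGalois.card_aut_eq_finrank, hfr]
  obtain ⟨g, hg⟩ := IsCyclic.exists_generator (α := Fˣ)
  have hog : orderOf g = p ^ m - 1 := by
    rw [orderOf_eq_card_of_forall_mem_zpowers hg, Nat.card_eq_fintype_card,
      Fintype.card_units, hF]
  have hpm1 : 0 < p ^ m - 1 := by
    have : 2 ≤ p ^ m := le_trans hp.two_le (Nat.le_self_pow hm.ne' p)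
    omega
  have haux : ∀ j k : Fin m, (j : ℕ) ≤ k → σ ^ (j : ℕ) = σ ^ (k : ℕ) → j = k := by
    intro j k hjk h
    by_contra hne
    have hlt : (j : ℕ) < k := lt_of_le_of_ne hjk (fun hh => hne (Fin.ext hh))
    have hx : ((g : F)) ^ p ^ (j : ℕ) = ((g : F)) ^ p ^ (k : ℕ) := by
      rw [← hpow, ← hpow, h]
    have hu : g ^ p ^ (j : ℕ) = g ^ p ^ (k : ℕ) := by
      ext; push_cast; exact hx
    have hmod : p ^ (j : ℕ) ≡ p ^ (k : ℕ) [MOD orderOf g] :=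
      pow_eq_pow_iff_modEq.mp hu
    rw [hog] at hmod
    have hk' : p ^ (k : ℕ) = p ^ (j : ℕ) * p ^ ((k : ℕ) - j) := by
      rw [← pow_add]; congr 1; omega
    have hcop : Nat.Coprime (p ^ (j : ℕ)) (p ^ m - 1) := by
      apply Nat.Coprime.pow_left
      rw [hp.coprime_iff_not_dvd]
      intro hdd
      have h1 : p ∣ p ^ m := dvd_pow_self p hm.ne'
      have h2 : p ∣ p ^ m - (p ^ m - 1) := Nat.dvd_sub h1 hdd
      have h3 : p ^ m - (p ^ m - 1) = 1 := by omega
      rw [h3] at h2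
      exact hp.one_lt.ne' (Nat.dvd_one.mp h2)
    rw [hk'] at hmod
    nth_rewrite 1 [← mul_one (p ^ (j : ℕ))] at hmod
    have hmod2 : 1 ≡ p ^ ((k : ℕ) - j) [MOD p ^ m - 1] :=
      Nat.ModEq.cancel_left_of_coprime (by rw [Nat.coprime_comm] at hcop; exact hcop) hmod
    have hone : 1 ≤ p ^ ((k : ℕ) - j) := Nat.one_le_pow _ _ hp.pos
    have hdvd2 : (p ^ m - 1) ∣ p ^ ((k : ℕ) - j) - 1 := (Nat.modEq_iff_dvd' hone).mp hmod2
    have hlt2 : p ^ ((k : ℕ) - j) < p ^ m :=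
      Nat.pow_lt_pow_right hp.one_lt (by omega)
    have hpos2 : 0 < p ^ ((k : ℕ) - j) - 1 := by
      have : p ≤ p ^ ((k : ℕ) - j) := Nat.le_self_pow (by omega) p
      have := hp.two_le
      omega
    have := Nat.le_of_dvd hpos2 hdvd2
    omega
  have hinj : Function.Injective (fun j : Fin m => σ ^ (j : ℕ)) := by
    intro j k h
    rcases le_total (j : ℕ) (k : ℕ) with hle | hle
    · exact haux j k hle h
    · exact (haux k j hle h.symm).symm
  have hbij : Function.Bijective (fun j : Fin m => σ ^ (j : ℕ)) :=
    (Fintype.bijective_iff_injective_and_card _).mpr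
      ⟨hinj, by rw [Fintype.card_fin, hcardGal]⟩
  rw [trace_eq_sum_automorphisms, ← Fin.sum_univ_eq_sum_range (fun j => u ^ p ^ j) m]
  exact (Fintype.sum_bijective _ hbij (fun j : Fin m => u ^ p ^ (j : ℕ))
    (fun τ => τ u) (fun j => (hpow j u).symm)).symm


/-- The linear code `C_D = {(Tr_{q/p}(a d))_{d ∈ D} : a ∈ F_q}` over `F_p`
with defining set `D ⊆ F_q`, with coordinates indexed by the elements of `D`. -/
noncomputable def codeD (p : ℕ) (F : Type*) [Field F] [Fintype F] [Algebra (ZMod p) F]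
    (D : Finset F) : Submodule (ZMod p) (D → ZMod p) :=
  LinearMap.range (LinearMap.pi fun x : D =>
    (Algebra.trace (ZMod p) F).comp (LinearMap.mulRight (ZMod p) (x : F)))

/-- for `p ≡ 3 (mod 4)`, `m = 2s` with `s` odd, `gcd(m,p) = 1`,
`q = p^m`, `d = (q-1)/(p+1)` and `D = {x ∈ F_q^* : Tr_{q/p}(x^d) = 0}`,
we have `|D| = 2(q-1)/(p+1)` and `dim_{F_p} C_D = m`. -/
theorem card_D_and_dim_codeD_p_three_mod_four
    (p m s : ℕ) (hp : p.Prime) (hodd : Odd p) (h4 : p % 4 = 3)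
    (hm : m = 2 * s) (hs : Odd s) (hs0 : 0 < s) (hmp : Nat.gcd m p = 1)
    (q d : ℕ) (hq : q = p ^ m) (hd : d = (q - 1) / (p + 1))
    (F : Type*) [Field F] [Fintype F] [Algebra (ZMod p) F]
    (hF : Fintype.card F = q)
    (D : Finset F)
    (hD : D = Finset.univ.filter fun x : F =>
      x ≠ 0 ∧ Algebra.trace (ZMod p) F (x ^ d) = 0) :
    D.card = 2 * (q - 1) / (p + 1) ∧ Module.finrank (ZMod p) (codeD p F D) = m := by
  classical
  haveI : Fact p.Prime := ⟨hp⟩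
  have hp3 : 3 ≤ p := by omega
  haveI : CharP F p := (Algebra.charP_iff (ZMod p) F p).mp (ZMod.charP p)
  have hm0 : 0 < m := by omega
  have hq1 : p + 1 ∣ q - 1 := by
    have h1 : p ^ 2 - 1 ∣ (p ^ 2) ^ s - 1 ^ s := Nat.sub_dvd_pow_sub_pow (p ^ 2) 1 s
    have h2 : p + 1 ∣ p ^ 2 - 1 := by
      refine ⟨p - 1, ?_⟩
      obtain ⟨t, rfl⟩ : ∃ t, p = t + 3 := ⟨p - 3, by omega⟩
      have e1 : (t + 3) ^ 2 = t ^ 2 + 6 * t + 9 := by ring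
      have e2 : (t + 3 + 1) * (t + 3 - 1) = t ^ 2 + 6 * t + 8 := by
        have e3 : t + 3 - 1 = t + 2 := by omega
        rw [e3]; ring
      omega
    have h3 : q - 1 = (p ^ 2) ^ s - 1 ^ s := by rw [hq, hm, pow_mul, one_pow]
    rw [h3]
    exact dvd_trans h2 h1
  have hdq : d * (p + 1) = q - 1 := by rw [hd]; exact Nat.div_mul_cancel hq1
  have hqge : p ^ 2 ≤ q := by
    rw [hq]; exact Nat.pow_le_pow_right (by omega) (by omega)
  have hq2 : 2 ≤ q := le_trans (by nlinarith) hqge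
  have hdpos : 0 < d := by
    rcases Nat.eq_zero_or_pos d with h | h
    · exfalso; rw [h, zero_mul] at hdq; omega
    · exact h
  obtain ⟨t4, ht4⟩ : 4 ∣ p + 1 := by omega
  have h4d : 4 * d ∣ q - 1 := ⟨t4, by rw [← hdq, ht4]; ring⟩
  have h2d : 2 * d ∣ q - 1 := dvd_trans ⟨2, by ring⟩ h4d
  have hsne : (s : F) ≠ 0 := by
    rw [Ne, CharP.cast_eq_zero_iff F p]
    intro hps
    have hpm : p ∣ m := by rw [hm]; exact Dvd.dvd.mul_left hps 2
    have h1 : p ∣ Nat.gcd m p := Nat.dvd_gcd hpm dvd_rfl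
    rw [hmp] at h1
    have := Nat.le_of_dvd one_pos h1
    omega
  -- the key characterization of trace-zero (p+1)-st roots of unity
  have key : ∀ u : F, u ^ (p + 1) = 1 → (Algebra.trace (ZMod p) F u = 0 ↔ u ^ 2 = -1) := by
    intro u hu
    have hup2 : u ^ p ^ 2 = u := by
      have he : p ^ 2 = (p + 1) * (p - 1) + 1 := by
        obtain ⟨t, rfl⟩ : ∃ t, p = t + 3 := ⟨p - 3, by omega⟩
        have e1 : (t + 3) ^ 2 = t ^ 2 + 6 * t + 9 := by ring
        have e2 : (t + 3 + 1) * (t + 3 - 1) = t ^ 2 + 6 * t + 8 := by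
          have e3 : t + 3 - 1 = t + 2 := by omega
          rw [e3]; ring
        omega
      rw [he, pow_add, pow_mul, hu, one_pow, one_mul, pow_one]
    have heven : ∀ i : ℕ, u ^ p ^ (2 * i) = u := by
      intro i; induction i with
      | zero => simp
      | succ n ih =>
        have h2 : p ^ (2 * (n + 1)) = p ^ (2 * n) * p ^ 2 := by
          rw [← pow_add]; congr 1
        rw [h2, pow_mul, ih, hup2]
    have hsum : ∀ n : ℕ, ∑ j ∈ Finset.range (2 * n), u ^ p ^ j = n • (u + u ^ p) := by
      intro n; induction n with
      | zero => simp
      | succ n ih =>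
        have h2n : 2 * (n + 1) = (2 * n + 1) + 1 := by omega
        rw [h2n, Finset.sum_range_succ, Finset.sum_range_succ, ih]
        have e1 : u ^ p ^ (2 * n) = u := heven n
        have e2 : u ^ p ^ (2 * n + 1) = u ^ p := by rw [pow_succ, pow_mul, e1]
        rw [e1, e2, succ_nsmul]
        abel
    have hformula := auxTraceFormula p F hm0 (by rw [hF, hq]) u
    rw [hm, hsum s] at hformula
    have hiff1 : Algebra.trace (ZMod p) F u = 0 ↔ u + u ^ p = 0 := by
      constructor
      · intro h0
        have h1 : (0 : F) = (s : F) * (u + u ^ p) := by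
          rw [← nsmul_eq_mul, ← hformula, h0, map_zero]
        rcases mul_eq_zero.mp h1.symm with h | h
        · exact absurd h hsne
        · exact h
      · intro h0
        apply (algebraMap (ZMod p) F).injective
        rw [map_zero, hformula, h0, smul_zero]
    rw [hiff1]
    constructor
    · intro h0
      have hup : u ^ p = -u := eq_neg_of_add_eq_zero_right h0
      have h1 : u ^ (p + 1) = -(u ^ 2) := by rw [pow_succ, hup]; ring
      rw [hu] at h1
      linear_combination h1
    · intro h2
      obtain ⟨k, hk⟩ : ∃ k, p = 4 * k + 3 := ⟨p / 4, by omega⟩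
      have hup : u ^ p = -u := by
        rw [hk, pow_add, pow_mul]
        have h4u : u ^ 4 = 1 := by
          have e : u ^ 4 = (u ^ 2) ^ 2 := by ring
          rw [e, h2]; ring
        rw [h4u, one_pow, one_mul]
        have e : u ^ 3 = u ^ 2 * u := by ring
        rw [e, h2]; ring
      rw [hup]; ring
  -- description of D via roots of unity
  have hne11 : (-1 : F) ≠ 1 := by
    intro h1
    have h20 : ((2 : ℕ) : F) = 0 := by push_cast; linear_combination -h1
    rw [CharP.cast_eq_zero_iff F p] at h20
    have := Nat.le_of_dvd (by norm_num) h20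
    omega
  have hDdesc : D = (Finset.univ.filter fun x : F => x ^ (4 * d) = 1)
      \ (Finset.univ.filter fun x : F => x ^ (2 * d) = 1) := by
    rw [hD]; ext x
    simp only [Finset.mem_filter, Finset.mem_sdiff, Finset.mem_univ, true_and, not_and]
    constructor
    · rintro ⟨hx0, htr⟩
      have hu : (x ^ d) ^ (p + 1) = 1 := by
        rw [← pow_mul, hdq, ← hF]
        exact FiniteField.pow_card_sub_one_eq_one x hx0
      have h2 := (key _ hu).mp htr
      have hxd2 : x ^ (2 * d) = -1 := by
        rw [show 2 * d = d * 2 by ring, pow_mul]; exact h2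
      constructor
      · rw [show 4 * d = 2 * d * 2 by ring, pow_mul, hxd2]; ring
      · rw [hxd2]; exact hne11
    · rintro ⟨h41, h21⟩
      have hx0 : x ≠ 0 := by
        rintro rfl
        rw [zero_pow (by omega : 4 * d ≠ 0)] at h41
        exact zero_ne_one h41
      refine ⟨hx0, ?_⟩
      have hxd2 : x ^ (2 * d) = -1 := by
        have hsq : x ^ (2 * d) * x ^ (2 * d) = 1 := by
          rw [← pow_add, show 2 * d + 2 * d = 4 * d by ring]; exact h41
        rcases mul_self_eq_one_iff.mp hsq with h | h
        · exact absurd h h21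
        · exact h
      have hu : (x ^ d) ^ (p + 1) = 1 := by
        rw [← pow_mul, hdq, ← hF]
        exact FiniteField.pow_card_sub_one_eq_one x hx0
      refine (key _ hu).mpr ?_
      rw [← pow_mul, show d * 2 = 2 * d by ring]; exact hxd2
  have hsub : (Finset.univ.filter fun x : F => x ^ (2 * d) = 1)
      ⊆ (Finset.univ.filter fun x : F => x ^ (4 * d) = 1) := by
    intro x hx
    simp only [Finset.mem_filter, Finset.mem_univ, true_and] at hx ⊢
    rw [show 4 * d = 2 * d * 2 by ring, pow_mul, hx, one_pow]
  have hc4 : ((Finset.univ : Finset F).filter fun x => x ^ (4 * d) = 1).card = 4 * d :=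
    auxCardRoots F (by omega) (by rw [hF]; exact h4d)
  have hc2 : ((Finset.univ : Finset F).filter fun x => x ^ (2 * d) = 1).card = 2 * d :=
    auxCardRoots F (by omega) (by rw [hF]; exact h2d)
  have hDcard : D.card = 2 * d := by
    rw [hDdesc, Finset.card_sdiff_of_subset hsub, hc4, hc2]; omega
  -- the counting inequality 2d ≥ p^(m-1)
  have hineq : p ^ (m - 1) ≤ 2 * d := by
    have hple : 0 < p + 1 := by omega
    apply Nat.le_of_mul_le_mul_right ?_ hple
    have e4 : 2 * d * (p + 1) = 2 * (q - 1) := by rw [mul_assoc, hdq]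
    rw [e4]
    have e5 : q = p ^ (m - 1) * p := by rw [hq, ← pow_succ]; congr 1; omega
    set a := p ^ (m - 1) with ha
    have e3 : 1 ≤ a := Nat.one_le_pow _ _ (by omega)
    have e2 : a * 3 ≤ a * p := Nat.mul_le_mul_left a hp3
    rw [e5]
    have e8 : 1 ≤ a * p := le_trans e3 (Nat.le_mul_of_pos_right a (by omega))
    zify [e8]
    have e2' : (a : ℤ) * 3 ≤ (a : ℤ) * p := by exact_mod_cast e2
    have e3' : (1 : ℤ) ≤ (a : ℤ) := by exact_mod_cast e3
    linarith
  have hfr : Module.finrank (ZMod p) F = m := by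
    have hc := Module.card_eq_pow_finrank (K := ZMod p) (V := F)
    rw [ZMod.card, hF, hq] at hc
    exact (Nat.pow_right_injective hp.two_le hc).symm
  constructor
  · rw [hDcard, ← hdq, show 2 * (d * (p + 1)) = 2 * d * (p + 1) by ring,
      Nat.mul_div_cancel _ (by omega : 0 < p + 1)]
  · set Φ := LinearMap.pi fun x : D =>
      (Algebra.trace (ZMod p) F).comp (LinearMap.mulRight (ZMod p) (x : F)) with hΦ
    have hinj : Function.Injective Φ := by
      rw [← LinearMap.ker_eq_bot, Submodule.eq_bot_iff]
      intro a ha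
      rw [LinearMap.mem_ker] at ha
      by_contra ha0
      set ℓ := (Algebra.trace (ZMod p) F).comp (LinearMap.mulLeft (ZMod p) a) with hℓ
      have hbD : ∀ x ∈ D, ℓ x = 0 := by
        intro x hx
        have h1 := congrFun ha ⟨x, hx⟩
        simpa [Φ, ℓ] using h1
      have hℓne : ∃ b, ℓ b ≠ 0 := by
        by_contra hall; push_neg at hall
        apply ha0
        apply (traceForm_nondegenerate (ZMod p) F).1 a
        intro b
        rw [Algebra.traceForm_apply]
        exact hall b
      obtain ⟨b, hb⟩ := hℓne
      have hsurjℓ : Function.Surjective ℓ := by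
        intro c
        refine ⟨(c * (ℓ b)⁻¹) • b, ?_⟩
        rw [map_smul, smul_eq_mul, mul_assoc, inv_mul_cancel₀ hb, mul_one]
      have hrange : LinearMap.range ℓ = ⊤ := LinearMap.range_eq_top.mpr hsurjℓ
      have hrk := LinearMap.finrank_range_add_finrank_ker ℓ
      rw [hrange, finrank_top, Module.finrank_self, hfr] at hrk
      have hkerc : Fintype.card (LinearMap.ker ℓ) = p ^ (m - 1) := by
        rw [Module.card_eq_pow_finrank (K := ZMod p) (V := LinearMap.ker ℓ), ZMod.card]
        congr 1
        omega
      have hsubker : D ⊆ (Set.toFinset ((LinearMap.ker ℓ : Submodule (ZMod p) F) : Set F)).erase 0 := by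
        intro x hx
        rw [Finset.mem_erase, Set.mem_toFinset]
        have hx0 : x ≠ 0 := by
          rw [hD] at hx
          exact (Finset.mem_filter.mp hx).2.1
        exact ⟨hx0, LinearMap.mem_ker.mpr (hbD x hx)⟩
      have hkerc' : ((LinearMap.ker ℓ : Submodule (ZMod p) F) : Set F).toFinset.card
          = p ^ (m - 1) := by
        rw [Set.toFinset_card, ← hkerc]
        exact Fintype.card_congr (Equiv.subtypeEquivRight fun x => Iff.rfl)
      have hcard_le : D.card ≤ p ^ (m - 1) - 1 := by
        have h1 := Finset.card_le_card hsubker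
        rwa [Finset.card_erase_of_mem (by
          rw [Set.mem_toFinset]; exact (LinearMap.ker ℓ).zero_mem),
          hkerc'] at h1
      rw [hDcard] at hcard_le
      have hp1 : 1 ≤ p ^ (m - 1) := Nat.one_le_pow _ _ (by omega)
      omega
    have hcode : codeD p F D = LinearMap.range Φ := rfl
    rw [hcode, LinearMap.finrank_range_of_inj hinj, hfr]
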